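/- For the scalar delay characteristic equation with B = 0 and C = d·Id on ℂ (d < 0): if |d|·τ < π/2 then every root z ∈ ℂ of z = d·e^{-zτ} satisfies Re z < 0. -/

import Mathlib

theorem stmt7 (d τ : ℝ) (hd : d < 0) (hτ : 0 < τ)
    (h : |d| * τ < Real.pi / 2) :
    ∀ z : ℂ, z = (d : ℂ) * Complex.exp (-z * (τ : ℂ)) → z.re < 0 := by
  intro z hz
  by_contra hx
  push_neg at hx
  have hre : (-z * (τ : ℂ)).re = -(z.re * τ) := by simp
  have him : (-z * (τ : ℂ)).im = -(z.im * τ) := by simp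
  have habs : ‖z‖ = |d| * Real.exp (-(z.re * τ)) := by
    conv_lhs => rw [hz]
    rw [norm_mul, Complex.norm_real, Real.norm_eq_abs, Complex.norm_exp, hre]
  have hexp_le : Real.exp (-(z.re * τ)) ≤ 1 := by
    rw [Real.exp_le_one_iff]
    nlinarith
  have him_le : |z.im| ≤ |d| := by
    calc |z.im| ≤ ‖z‖ := Complex.abs_im_le_norm z
    _ = |d| * Real.exp (-(z.re * τ)) := habs
    _ ≤ |d| := by nlinarith [abs_nonneg d]
  have harg : |z.im * τ| < Real.pi / 2 := by
    rw [abs_mul, abs_of_pos hτ]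
    calc |z.im| * τ ≤ |d| * τ := by nlinarith
    _ < Real.pi / 2 := h
  have hcos : 0 < Real.cos (-(z.im * τ)) := by
    apply Real.cos_pos_of_mem_Ioo
    constructor
    · have := abs_lt.mp harg; linarith
    · have := abs_lt.mp harg; linarith
  have hzre : z.re = d * (Real.exp (-(z.re * τ)) * Real.cos (-(z.im * τ))) := by
    conv_lhs => rw [hz]
    rw [Complex.mul_re]
    simp [Complex.exp_re, hre, him]
  nlinarith [mul_pos (Real.exp_pos (-(z.re * τ))) hcos]
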